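/- arXiv:2412.06497 — 3 statements merged into one kernel-verified Lean document; each statement's English description precedes it below -/
import Mathlib

section
/- Fix an integer k ≥ 2 and r₀ > 0, and set r = √(r₀/(2·log₂ e)); assume r ≤ 1 and let N = ⌊1/r⌋. Then for any two distinct probability vectors P, Q ∈ Γ_{r,k} (coordinates integer multiples of 1/N), the Kullback–Leibler divergence in bits satisfies D(P‖Q) ≥ r₀. -/
open scoped Classical

noncomputable def klBits {k : ℕ} (P Q : Fin k → ℝ) : EReal :=
  if ∃ i, 0 < P i ∧ Q i = 0 then ⊤
  else ((∑ i, if P i = 0 then 0 else P i * Real.logb 2 (P i / Q i) : ℝ) : EReal)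


noncomputable def Gfun (t : ℝ) : ℝ := (t+1) * Real.log t - 2*(t-1)
noncomputable def Ffun (t : ℝ) : ℝ := 2*(t+2)*(t * Real.log t - t + 1) - 3*(t-1)^2

lemma hasDerivG {x : ℝ} (hx : 0 < x) :
    HasDerivAt Gfun (Real.log x + (x+1)/x - 2) x := by
  have h1 : HasDerivAt (fun t : ℝ => (t+1) * Real.log t)
      (1 * Real.log x + (x+1) * x⁻¹) x :=
    ((hasDerivAt_id x).add_const 1).mul (Real.hasDerivAt_log hx.ne')
  have h2 : HasDerivAt (fun t : ℝ => 2*(t-1)) 2 x := by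
    simpa using ((hasDerivAt_id x).sub_const 1).const_mul 2
  refine (h1.sub h2).congr_deriv ?_
  rw [one_mul, div_eq_mul_inv]

lemma G_mono : MonotoneOn Gfun (Set.Ioi (0:ℝ)) := by
  apply monotoneOn_of_deriv_nonneg (convex_Ioi 0)
  · intro x hx
    exact (hasDerivG hx).continuousAt.continuousWithinAt
  · intro x hx
    rw [interior_Ioi] at hx
    exact (hasDerivG hx).differentiableAt.differentiableWithinAt
  · intro x hx
    rw [interior_Ioi] at hx
    rw [(hasDerivG hx).deriv]
    have h := Real.one_sub_inv_le_log_of_pos hx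
    have h2 : (x+1)/x = 1 + x⁻¹ := by
      rw [add_div, div_self hx.ne', one_div]
    rw [h2]
    linarith

lemma G_one : Gfun 1 = 0 := by simp [Gfun]

lemma hasDerivF {x : ℝ} (hx : 0 < x) :
    HasDerivAt Ffun (4 * Gfun x) x := by
  have h1 : HasDerivAt (fun t : ℝ => t * Real.log t) (Real.log x + 1) x := by
    have := (hasDerivAt_id x).mul (Real.hasDerivAt_log hx.ne')
    refine this.congr_deriv ?_
    simp [hx.ne']
  have h2 : HasDerivAt (fun t : ℝ => t * Real.log t - t + 1) (Real.log x) x := by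
    simpa using (h1.sub (hasDerivAt_id x)).add_const 1
  have h3 : HasDerivAt (fun t : ℝ => 2*(t+2)) 2 x := by
    simpa using ((hasDerivAt_id x).add_const 2).const_mul 2
  have h4 := h3.mul h2
  have h5 : HasDerivAt (fun t : ℝ => 3*(t-1)^2) (3*(2*(x-1))) x := by
    have := (((hasDerivAt_id x).sub_const 1).pow 2).const_mul 3
    simpa using this
  have h6 := h4.sub h5
  refine h6.congr_deriv ?_
  unfold Gfun
  ring

lemma F_nonneg {t : ℝ} (ht : 0 < t) : 0 ≤ Ffun t := by
  have hF1 : Ffun 1 = 0 := by simp [Ffun]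
  rcases le_total t 1 with h | h
  · have anti : AntitoneOn Ffun (Set.Ioc (0:ℝ) 1) := by
      apply antitoneOn_of_deriv_nonpos (convex_Ioc 0 1)
      · intro x hx
        exact (hasDerivF hx.1).continuousAt.continuousWithinAt
      · intro x hx
        rw [interior_Ioc] at hx
        exact (hasDerivF hx.1).differentiableAt.differentiableWithinAt
      · intro x hx
        rw [interior_Ioc] at hx
        rw [(hasDerivF hx.1).deriv]
        have := G_mono (Set.mem_Ioi.mpr hx.1) (Set.mem_Ioi.mpr one_pos) hx.2.le
        rw [G_one] at this
        linarith
    have := anti (Set.mem_Ioc.mpr ⟨ht, h⟩) (Set.mem_Ioc.mpr ⟨one_pos, le_refl 1⟩) h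
    rw [hF1] at this; exact this
  · have mono : MonotoneOn Ffun (Set.Ici (1:ℝ)) := by
      apply monotoneOn_of_deriv_nonneg (convex_Ici 1)
      · intro x hx
        exact (hasDerivF (lt_of_lt_of_le one_pos hx)).continuousAt.continuousWithinAt
      · intro x hx
        rw [interior_Ici] at hx
        exact (hasDerivF (lt_trans one_pos hx)).differentiableAt.differentiableWithinAt
      · intro x hx
        rw [interior_Ici] at hx
        rw [(hasDerivF (lt_trans one_pos hx)).deriv]
        have := G_mono (Set.mem_Ioi.mpr one_pos) (Set.mem_Ioi.mpr (lt_trans one_pos hx)) hx.le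
        rw [G_one] at this
        linarith
    have := mono (Set.mem_Ici.mpr (le_refl 1)) (Set.mem_Ici.mpr h) h
    rw [hF1] at this; exact this

lemma key_pt {t : ℝ} (ht : 0 < t) :
    3*(t-1)^2 / (2*(t+2)) ≤ t * Real.log t - t + 1 := by
  have h := F_nonneg ht
  unfold Ffun at h
  rw [div_le_iff₀ (by linarith : (0:ℝ) < 2*(t+2))]
  nlinarith [h]

lemma pt2 {p q : ℝ} (hp : 0 ≤ p) (hq : 0 ≤ q) (himp : 0 < p → 0 < q) :
    p - q + 3*(p-q)^2/(2*(p+2*q)) ≤ (if p = 0 then 0 else p * Real.log (p/q)) := by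
  rcases eq_or_lt_of_le hp with hp0 | hp0
  · rw [if_pos hp0.symm, ← hp0]
    rcases eq_or_lt_of_le hq with hq0 | hq0
    · rw [← hq0]; norm_num
    · have e : 3*((0:ℝ)-q)^2/(2*(0+2*q)) = 3*q/4 := by
        field_simp; ring
      rw [e]; linarith
  · have hq0 := himp hp0
    rw [if_neg hp0.ne']
    have h1 := key_pt (div_pos hp0 hq0)
    have h2 := mul_le_mul_of_nonneg_left h1 hq
    have e1 : q * (3*((p/q)-1)^2/(2*((p/q)+2))) = 3*(p-q)^2/(2*(p+2*q)) := by
      have hd : p + 2*q ≠ 0 := by positivity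
      field_simp
    have e2 : q * ((p/q) * Real.log (p/q) - (p/q) + 1) = p * Real.log (p/q) - p + q := by
      field_simp
    rw [e1, e2] at h2
    linarith

/-- Pinsker-type bound on finite types. -/
lemma pinsker {k : ℕ} (P Q : Fin k → ℝ)
    (hPnn : ∀ i, 0 ≤ P i) (hPsum : ∑ i, P i = 1)
    (hQnn : ∀ i, 0 ≤ Q i) (hQsum : ∑ i, Q i = 1)
    (himp : ∀ i, 0 < P i → 0 < Q i) :
    (∑ i, |P i - Q i|)^2 / 2 ≤ ∑ i, (if P i = 0 then 0 else P i * Real.log (P i / Q i)) := by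
  set W : Fin k → ℝ := fun i => 3*(P i - Q i)^2/(2*(P i + 2*Q i)) with hW
  have hS1 : ∑ i, (P i - Q i + W i) ≤ ∑ i, (if P i = 0 then 0 else P i * Real.log (P i / Q i)) :=
    Finset.sum_le_sum (fun i _ => pt2 (hPnn i) (hQnn i) (himp i))
  rw [Finset.sum_add_distrib, Finset.sum_sub_distrib, hPsum, hQsum] at hS1
  -- Cauchy-Schwarz
  set f : Fin k → ℝ := fun i => Real.sqrt ((2/3)*(P i + 2*Q i)) with hf
  set g : Fin k → ℝ := fun i => if P i + 2*Q i = 0 then 0 else |P i - Q i| / f i with hg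
  have hnn : ∀ i, 0 ≤ P i + 2*Q i := fun i => by linarith [hPnn i, hQnn i]
  have hfg : ∀ i, f i * g i = |P i - Q i| := by
    intro i
    by_cases h : P i + 2*Q i = 0
    · have hp : P i = 0 := by linarith [hPnn i, hQnn i]
      have hq : Q i = 0 := by linarith [hPnn i, hQnn i]
      simp [hg, h, hp, hq]
    · have hpos : 0 < (2/3)*(P i + 2*Q i) := by
        have := lt_of_le_of_ne (hnn i) (Ne.symm h); linarith
      have hfpos : 0 < f i := Real.sqrt_pos.mpr hpos
      simp only [hg, if_neg h]
      rw [mul_div_cancel₀ _ hfpos.ne']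
  have hf2 : ∑ i, f i ^ 2 = 2 := by
    have he : ∀ i, f i ^2 = (2/3)*(P i + 2*Q i) :=
      fun i => Real.sq_sqrt (by have := hnn i; linarith)
    simp only [he]
    rw [← Finset.mul_sum, Finset.sum_add_distrib, ← Finset.mul_sum, hPsum, hQsum]
    norm_num
  have hg2 : ∀ i, g i ^ 2 = W i := by
    intro i
    by_cases h : P i + 2*Q i = 0
    · have hp : P i = 0 := by linarith [hPnn i, hQnn i]
      have hq : Q i = 0 := by linarith [hPnn i, hQnn i]
      simp [hg, hW, h, hp, hq]
    · have hpos : 0 < P i + 2*Q i := lt_of_le_of_ne (hnn i) (Ne.symm h)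
      simp only [hg, if_neg h, hW]
      rw [div_pow, Real.sq_sqrt (by linarith), sq_abs]
      field_simp
  have hCS := Finset.sum_mul_sq_le_sq_mul_sq Finset.univ f g
  simp only [hfg, hg2] at hCS
  rw [hf2] at hCS
  have : (∑ i, |P i - Q i|)^2 / 2 ≤ ∑ i, W i := by
    rw [div_le_iff₀ (by norm_num : (0:ℝ) < 2)]
    calc (∑ i, |P i - Q i|)^2 ≤ 2 * ∑ i, W i := hCS
    _ = (∑ i, W i) * 2 := by ring
  linarith

/-- For `r = √(r₀/(2·log₂ e))` with `r ≤ 1` and `N = ⌊1/r⌋`, any two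
distinct probability vectors on `Fin k` with all coordinates integer multiples of
`1/N` satisfy `D(P‖Q) ≥ r₀` (KL divergence in bits). -/
theorem kl_packing_of_grid (k : ℕ) (hk : 2 ≤ k) (r₀ : ℝ) (hr₀ : 0 < r₀)
    (r : ℝ) (hr : r = Real.sqrt (r₀ / (2 * Real.logb 2 (Real.exp 1))))
    (hr1 : r ≤ 1)
    (N : ℕ) (hN : N = ⌊1 / r⌋₊)
    (P Q : Fin k → ℝ)
    (hPnn : ∀ i, 0 ≤ P i) (hPsum : ∑ i, P i = 1)
    (hQnn : ∀ i, 0 ≤ Q i) (hQsum : ∑ i, Q i = 1)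
    (hPgrid : ∀ i, ∃ a : ℕ, P i = (a : ℝ) / N)
    (hQgrid : ∀ i, ∃ a : ℕ, Q i = (a : ℝ) / N)
    (hne : P ≠ Q) :
    (r₀ : EReal) ≤ klBits P Q := by
  unfold klBits
  by_cases htop : ∃ i, 0 < P i ∧ Q i = 0
  · rw [if_pos htop]; exact le_top
  · rw [if_neg htop]
    push_neg at htop
    have himp : ∀ i, 0 < P i → 0 < Q i := fun i h =>
      lt_of_le_of_ne (hQnn i) (Ne.symm (htop i h))
    have hlog2 : (0:ℝ) < Real.log 2 := Real.log_pos (by norm_num)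
    have hlogb : Real.logb 2 (Real.exp 1) = 1 / Real.log 2 := by
      rw [Real.logb, Real.log_exp]
    have hargnn : 0 ≤ r₀ / (2 * Real.logb 2 (Real.exp 1)) := by
      rw [hlogb]; positivity
    have hrpos : 0 < r := by
      rw [hr]; apply Real.sqrt_pos.mpr; rw [hlogb]; positivity
    have hr2 : 2 * r^2 = r₀ * Real.log 2 := by
      rw [hr, Real.sq_sqrt hargnn, hlogb]
      field_simp
    have hN1 : 1 ≤ N := by
      rw [hN]
      apply Nat.le_floor
      rw [Nat.cast_one, le_div_iff₀ hrpos]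
      linarith
    have hNpos : (0:ℝ) < (N:ℝ) := by exact_mod_cast hN1
    have hrN : r ≤ 1/(N:ℝ) := by
      have hfl : (N:ℝ) ≤ 1/r := by rw [hN]; exact Nat.floor_le (by positivity)
      rw [le_div_iff₀ hNpos]
      have := mul_le_mul_of_nonneg_left hfl hrpos.le
      rw [mul_one_div, div_self hrpos.ne'] at this
      linarith
    -- grid gap
    have gap : ∀ i, P i ≠ Q i → 1/(N:ℝ) ≤ |P i - Q i| := by
      intro i hi
      obtain ⟨a, ha⟩ := hPgrid i
      obtain ⟨b, hb⟩ := hQgrid i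
      have hab : a ≠ b := by
        rintro rfl; exact hi (by rw [ha, hb])
      have h1 : (1:ℝ) ≤ |(a:ℝ) - (b:ℝ)| := by
        have hz : (a:ℤ) - (b:ℤ) ≠ 0 := sub_ne_zero.mpr (by exact_mod_cast hab)
        have := Int.one_le_abs hz
        have e : |(a:ℝ) - (b:ℝ)| = ((|(a:ℤ) - (b:ℤ)| : ℤ) : ℝ) := by
          push_cast; ring_nf
        rw [e]; exact_mod_cast this
      rw [ha, hb, div_sub_div_same, abs_div, abs_of_pos hNpos]
      exact (div_le_div_iff_of_pos_right hNpos).mpr h1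
    -- two differing indices
    obtain ⟨i₀, hi₀⟩ : ∃ i, P i ≠ Q i := by
      by_contra h; push_neg at h; exact hne (funext h)
    obtain ⟨j, hj, hji⟩ : ∃ j, P j ≠ Q j ∧ j ≠ i₀ := by
      by_contra h; push_neg at h
      have hz : ∑ i, (P i - Q i) = P i₀ - Q i₀ := by
        apply Finset.sum_eq_single
        · intro b _ hb
          by_contra hne'
          exact hb (h b (fun he => hne' (sub_eq_zero.mpr he)))
        · intro h'; exact absurd (Finset.mem_univ i₀) h'
      have hz0 : ∑ i, (P i - Q i) = 0 := by
        rw [Finset.sum_sub_distrib, hPsum, hQsum]; ring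
      exact hi₀ (sub_eq_zero.mp (hz0 ▸ hz).symm)
    -- total variation lower bound
    have hVge : 2/(N:ℝ) ≤ ∑ i, |P i - Q i| := by
      have hsub := Finset.sum_le_sum_of_subset_of_nonneg
        (Finset.subset_univ ({i₀, j} : Finset (Fin k)))
        (fun i _ _ => abs_nonneg (P i - Q i))
      rw [Finset.sum_pair (Ne.symm hji)] at hsub
      have g1 := gap i₀ hi₀
      have g2 := gap j hj
      have : 2/(N:ℝ) = 1/(N:ℝ) + 1/(N:ℝ) := by ring
      rw [this]
      linarith
    have hpin := pinsker P Q hPnn hPsum hQnn hQsum himp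
    -- convert sum of logb to sum of log
    have hconv : (∑ i, if P i = 0 then (0:ℝ) else P i * Real.logb 2 (P i / Q i))
        = (∑ i, if P i = 0 then (0:ℝ) else P i * Real.log (P i / Q i)) / Real.log 2 := by
      rw [Finset.sum_div]
      apply Finset.sum_congr rfl
      intro i _
      split
      · simp
      · rw [Real.logb, mul_div_assoc]
    rw [EReal.coe_le_coe_iff, hconv, le_div_iff₀ hlog2]
    have hVnn : (0:ℝ) ≤ 2/(N:ℝ) := by positivity
    have hsq : (2/(N:ℝ))^2 ≤ (∑ i, |P i - Q i|)^2 := pow_le_pow_left₀ hVnn hVge 2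
    have h2N : 2 * r^2 ≤ (2/(N:ℝ))^2 / 2 := by
      have : r^2 ≤ (1/(N:ℝ))^2 := pow_le_pow_left₀ hrpos.le hrN 2
      have e : (2/(N:ℝ))^2 / 2 = 2 * (1/(N:ℝ))^2 := by ring
      rw [e]; linarith
    calc r₀ * Real.log 2 = 2 * r^2 := hr2.symm
    _ ≤ (2/(N:ℝ))^2 / 2 := h2N
    _ ≤ (∑ i, |P i - Q i|)^2 / 2 := by linarith
    _ ≤ _ := hpin
end

section
/- Fix real numbers δ₁ > 0 and δ₂ > 0 with δ₁ + δ₂ < 1 and set ξ = 1 − δ₁ − δ₂. Fix r₀ > 0 and set r = (1/ξ)·√(r₀/(2·log₂ e)); assume r ≤ 1 and let N = ⌊1/r⌋. Let Γ*_{r,2} = { (δ₁ + ξ·a/N, 1 − δ₁ − ξ·a/N) : a = 0, 1, …, N }. Then Γ*_{r,2} is a set of probability vectors on Fin 2 contained in { (q, 1−q) : δ₁ ≤ q ≤ 1 − δ₂ }, its cardinality is exactly N + 1 = ⌊1/r⌋ + 1, and any two distinct elements P, Q ∈ Γ*_{r,2} satisfy D(P‖Q) ≥ r₀. -/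
open scoped Classical

lemma pinsker_binary (p q : ℝ) (hp0 : 0 < p) (hp1 : p < 1) (hq0 : 0 < q) (hq1 : q < 1) :
    2 * (p - q)^2 ≤ p * Real.log (p / q) + (1 - p) * Real.log ((1 - p) / (1 - q)) := by
  set g : ℝ → ℝ := fun x =>
    p * (Real.log p - Real.log x) + (1 - p) * (Real.log (1 - p) - Real.log (1 - x))
      - 2 * (p - x)^2 with hg
  have key : ∀ x ∈ Set.Ioo (0:ℝ) 1, HasDerivAt g ((x - p) * (1 / (x * (1 - x)) - 4)) x := by
    intro x hx
    obtain ⟨hx0, hx1⟩ := hx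
    have hx0' : x ≠ 0 := ne_of_gt hx0
    have hx1' : (1 : ℝ) - x ≠ 0 := by linarith [sub_pos.2 hx1]
    have A : HasDerivAt (fun x => Real.log p - Real.log x) (-x⁻¹) x :=
      (Real.hasDerivAt_log hx0').const_sub (Real.log p)
    have B : HasDerivAt (fun x : ℝ => 1 - x) (-1) x := (hasDerivAt_id x).const_sub 1
    have Blog : HasDerivAt (fun x => Real.log (1 - x)) ((1 - x)⁻¹ * (-1)) x :=
      (Real.hasDerivAt_log hx1').comp x B
    have C : HasDerivAt (fun x => Real.log (1 - p) - Real.log (1 - x))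
        (-((1 - x)⁻¹ * (-1))) x := Blog.const_sub _
    have D : HasDerivAt (fun x : ℝ => (p - x)^2) ((2:ℕ) * (p - x)^1 * (-1)) x :=
      ((hasDerivAt_id x).const_sub p).pow 2
    have G := ((A.const_mul p).add (C.const_mul (1 - p))).sub (D.const_mul 2)
    refine G.congr_deriv ?_
    field_simp
    ring
  have hIcc : ∀ a b : ℝ, 0 < a → b < 1 → Set.Icc a b ⊆ Set.Ioo (0:ℝ) 1 := by
    intro a b ha hb y hy
    exact ⟨lt_of_lt_of_le ha hy.1, lt_of_le_of_lt hy.2 hb⟩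
  have hgp : g p = 0 := by simp [hg]
  have main : 0 ≤ g q := by
    rcases lt_trichotomy p q with hpq | hpq | hpq
    · have hsub := hIcc p q hp0 hq1
      have mono : MonotoneOn g (Set.Icc p q) := by
        apply monotoneOn_of_deriv_nonneg (convex_Icc p q)
        · exact fun x hx => ((key x (hsub hx)).differentiableAt.continuousAt).continuousWithinAt
        · intro x hx
          rw [interior_Icc] at hx
          exact ((key x (hsub (Set.Ioo_subset_Icc_self hx))).differentiableAt).differentiableWithinAt
        · intro x hx
          rw [interior_Icc] at hx
          have hx' : x ∈ Set.Ioo (0:ℝ) 1 := hsub (Set.Ioo_subset_Icc_self hx)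
          rw [(key x hx').deriv]
          have h4 : x * (1 - x) ≤ 1/4 := by nlinarith [sq_nonneg (x - 1/2)]
          have hxpos : 0 < x * (1 - x) := mul_pos hx'.1 (by linarith [hx'.2])
          have : (4:ℝ) ≤ 1 / (x * (1 - x)) := by
            rw [le_div_iff₀ hxpos]; linarith
          have hxp : 0 ≤ x - p := by linarith [hx.1]
          nlinarith
      have := mono (Set.left_mem_Icc.2 hpq.le) (Set.right_mem_Icc.2 hpq.le) hpq.le
      linarith [hgp]
    · subst hpq; linarith [hgp]
    · have hsub := hIcc q p hq0 hp1
      have anti : AntitoneOn g (Set.Icc q p) := by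
        apply antitoneOn_of_deriv_nonpos (convex_Icc q p)
        · exact fun x hx => ((key x (hsub hx)).differentiableAt.continuousAt).continuousWithinAt
        · intro x hx
          rw [interior_Icc] at hx
          exact ((key x (hsub (Set.Ioo_subset_Icc_self hx))).differentiableAt).differentiableWithinAt
        · intro x hx
          rw [interior_Icc] at hx
          have hx' : x ∈ Set.Ioo (0:ℝ) 1 := hsub (Set.Ioo_subset_Icc_self hx)
          rw [(key x hx').deriv]
          have h4 : x * (1 - x) ≤ 1/4 := by nlinarith [sq_nonneg (x - 1/2)]
          have hxpos : 0 < x * (1 - x) := mul_pos hx'.1 (by linarith [hx'.2])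
          have : (4:ℝ) ≤ 1 / (x * (1 - x)) := by
            rw [le_div_iff₀ hxpos]; linarith
          have hxp : x - p ≤ 0 := by linarith [hx.2]
          nlinarith
      have := anti (Set.left_mem_Icc.2 hpq.le) (Set.right_mem_Icc.2 hpq.le) hpq.le
      linarith [hgp]
  have e1 : Real.log (p / q) = Real.log p - Real.log q :=
    Real.log_div (ne_of_gt hp0) (ne_of_gt hq0)
  have e2 : Real.log ((1 - p) / (1 - q)) = Real.log (1 - p) - Real.log (1 - q) :=
    Real.log_div (by linarith) (by linarith)
  rw [e1, e2]
  simp only [hg] at main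
  linarith


set_option maxHeartbeats 1000000 in
/-- The binary grid `Γ*_{r,2} = {(δ₁ + ξ·a/N, 1 − δ₁ − ξ·a/N) : a = 0,…,N}`
with `ξ = 1 − δ₁ − δ₂`, `r = (1/ξ)·√(r₀/(2·log₂ e))` and `N = ⌊1/r⌋` consists of
probability vectors on `Fin 2` contained in `{(q, 1−q) : δ₁ ≤ q ≤ 1 − δ₂}`, has
cardinality exactly `N + 1`, and any two distinct elements satisfy `D(P‖Q) ≥ r₀`. -/
theorem binary_grid_packing (δ₁ δ₂ : ℝ) (h1 : 0 < δ₁) (h2 : 0 < δ₂) (h12 : δ₁ + δ₂ < 1)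
    (ξ : ℝ) (hξ : ξ = 1 - δ₁ - δ₂)
    (r₀ : ℝ) (hr₀ : 0 < r₀)
    (r : ℝ) (hr : r = (1 / ξ) * Real.sqrt (r₀ / (2 * Real.logb 2 (Real.exp 1))))
    (hr1 : r ≤ 1)
    (N : ℕ) (hN : N = ⌊1 / r⌋₊)
    (Γ : Set (Fin 2 → ℝ))
    (hΓ : Γ = {P | ∃ a : ℕ, a ≤ N ∧
        P = ![δ₁ + ξ * (a : ℝ) / N, 1 - δ₁ - ξ * (a : ℝ) / N]}) :
    (∀ P ∈ Γ, (∀ i, 0 ≤ P i) ∧ (∑ i, P i = 1) ∧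
        δ₁ ≤ P 0 ∧ P 0 ≤ 1 - δ₂ ∧ P 1 = 1 - P 0) ∧
    Γ.ncard = N + 1 ∧
    (∀ P ∈ Γ, ∀ Q ∈ Γ, P ≠ Q → (r₀ : EReal) ≤ klBits P Q) := by
  have hξpos : 0 < ξ := by rw [hξ]; linarith
  have hlog2 : 0 < Real.log 2 := Real.log_pos (by norm_num)
  have hL : Real.logb 2 (Real.exp 1) = 1 / Real.log 2 := by
    rw [Real.logb, Real.log_exp, one_div]
  have hargpos : 0 < r₀ / (2 * Real.logb 2 (Real.exp 1)) := by
    rw [hL]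
    exact div_pos hr₀ (by positivity)
  have hrpos : 0 < r := by
    rw [hr]
    exact mul_pos (by positivity) (Real.sqrt_pos.2 hargpos)
  have hN1 : 1 ≤ N := by
    rw [hN]
    apply Nat.le_floor
    rw [Nat.cast_one, le_div_iff₀ hrpos]
    linarith
  have hNpos : (0:ℝ) < N := by exact_mod_cast Nat.lt_of_lt_of_le Nat.zero_lt_one hN1
  have hNr : (N:ℝ) ≤ 1 / r := by rw [hN]; exact Nat.floor_le (by positivity)
  have hrN : r * N ≤ 1 := by
    rw [le_div_iff₀ hrpos] at hNr; linarith [hNr]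
  have hxr : ξ * r ≤ ξ / N := by
    rw [le_div_iff₀ hNpos]; nlinarith
  have hxrpos : 0 < ξ * r := mul_pos hξpos hrpos
  have hsq : (ξ * r)^2 = r₀ * Real.log 2 / 2 := by
    have : ξ * r = Real.sqrt (r₀ / (2 * Real.logb 2 (Real.exp 1))) := by
      rw [hr, one_div, mul_inv_cancel_left₀ hξpos.ne']
    rw [this, Real.sq_sqrt hargpos.le, hL]
    field_simp
  -- bounds on coordinates
  have hbound : ∀ a : ℕ, a ≤ N → δ₁ ≤ δ₁ + ξ * (a:ℝ) / N ∧ δ₁ + ξ * (a:ℝ) / N ≤ 1 - δ₂ := by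
    intro a ha
    have h0 : 0 ≤ ξ * (a:ℝ) / N := by positivity
    have h1' : ξ * (a:ℝ) / N ≤ ξ := by
      rw [div_le_iff₀ hNpos]
      have : (a:ℝ) ≤ N := by exact_mod_cast ha
      nlinarith
    have hs : δ₁ + ξ = 1 - δ₂ := by rw [hξ]; ring
    exact ⟨by linarith, by linarith⟩
  refine ⟨?_, ?_, ?_⟩
  · intro P hP
    rw [hΓ] at hP
    obtain ⟨a, ha, rfl⟩ := hP
    obtain ⟨hb1, hb2⟩ := hbound a ha
    refine ⟨?_, ?_, ?_, ?_, ?_⟩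
    · intro i
      fin_cases i
      · show (0:ℝ) ≤ δ₁ + ξ * (a:ℝ) / N
        linarith
      · show (0:ℝ) ≤ 1 - δ₁ - ξ * (a:ℝ) / N
        linarith
    · rw [Fin.sum_univ_two]
      simp only [Matrix.cons_val_zero, Matrix.cons_val_one, Matrix.head_cons]
      ring
    · simpa using hb1
    · simpa using hb2
    · show (1:ℝ) - δ₁ - ξ * (a:ℝ) / N = 1 - (δ₁ + ξ * (a:ℝ) / N)
      ring
  · have hΓ' : Γ = (fun a : ℕ => ![δ₁ + ξ * (a : ℝ) / N, 1 - δ₁ - ξ * (a : ℝ) / N]) ''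
        Set.Iic N := by
      rw [hΓ]; ext P; simp [Set.mem_image, eq_comm, and_comm]
    rw [hΓ', Set.ncard_image_of_injOn, ← Finset.coe_Iic, Set.ncard_coe_finset, Nat.card_Iic]
    intro a _ b _ hab
    have h0 := congr_fun hab 0
    simp only [Matrix.cons_val_zero] at h0
    field_simp at h0
    have h0' : (a:ℝ) = b := mul_left_cancel₀ hξpos.ne' (by linarith : ξ * (a:ℝ) = ξ * b)
    exact_mod_cast h0'
  · intro P hP Q hQ hPQ
    rw [hΓ] at hP hQ
    obtain ⟨a, ha, rfl⟩ := hP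
    obtain ⟨b, hb, rfl⟩ := hQ
    have hab : a ≠ b := by rintro rfl; exact hPQ rfl
    set p := δ₁ + ξ * (a:ℝ) / N with hp
    set q := δ₁ + ξ * (b:ℝ) / N with hq
    obtain ⟨hpa1, hpa2⟩ := hbound a ha
    obtain ⟨hqa1, hqa2⟩ := hbound b hb
    have hp0 : 0 < p := lt_of_lt_of_le h1 hpa1
    have hp1 : p < 1 := lt_of_le_of_lt hpa2 (by linarith)
    have hq0 : 0 < q := lt_of_lt_of_le h1 hqa1
    have hq1 : q < 1 := lt_of_le_of_lt hqa2 (by linarith)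
    -- evaluate klBits
    have hkl : klBits ![p, 1 - δ₁ - ξ * (a:ℝ) / N] ![q, 1 - δ₁ - ξ * (b:ℝ) / N]
        = ((p * Real.logb 2 (p / q) + (1 - p) * Real.logb 2 ((1 - p) / (1 - q)) : ℝ) : EReal) := by
      rw [klBits, if_neg]
      · congr 1
        rw [Fin.sum_univ_two]
        have e1 : (1 : ℝ) - δ₁ - ξ * (a:ℝ) / N = 1 - p := by rw [hp]; ring
        have e2 : (1 : ℝ) - δ₁ - ξ * (b:ℝ) / N = 1 - q := by rw [hq]; ring
        simp only [Matrix.cons_val_zero, Matrix.cons_val_one, Matrix.head_cons, e1, e2]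
        rw [if_neg (ne_of_gt hp0), if_neg (ne_of_gt (by linarith : (0:ℝ) < 1 - p))]
      · rintro ⟨i, hi, hi2⟩
        fin_cases i <;> simp at hi2 <;> [exact (ne_of_gt hq0) hi2; nlinarith]
    rw [hkl, EReal.coe_le_coe_iff]
    -- gap bound
    have hd : 1 ≤ ((a:ℝ) - b)^2 := by
      have hz : ((a:ℤ) - b) ≠ 0 := sub_ne_zero.2 (by exact_mod_cast hab)
      have h2' : (1:ℝ) ≤ |((a:ℤ) - (b:ℤ) : ℤ)| := by exact_mod_cast Int.one_le_abs hz
      push_cast at h2'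
      rw [← sq_abs]
      nlinarith [abs_nonneg ((a:ℝ) - b)]
    have hgap : (ξ * r)^2 ≤ (p - q)^2 := by
      have hpq : p - q = (ξ / N) * ((a:ℝ) - b) := by rw [hp, hq]; field_simp; ring
      rw [hpq, mul_pow]
      have h1' : (ξ*r)^2 ≤ (ξ/N)^2 := by nlinarith
      nlinarith [sq_nonneg (ξ/N)]
    have hpinsker := pinsker_binary p q hp0 hp1 hq0 hq1
    have hnats : r₀ * Real.log 2 ≤ p * Real.log (p / q) + (1 - p) * Real.log ((1 - p) / (1 - q)) :=
      calc r₀ * Real.log 2 = 2 * ((ξ * r)^2) := by rw [hsq]; ring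
        _ ≤ 2 * ((p - q)^2) := mul_le_mul_of_nonneg_left hgap (by norm_num)
        _ ≤ _ := hpinsker
    have hlb : ∀ y : ℝ, Real.logb 2 y = Real.log y / Real.log 2 := fun y => rfl
    rw [show p * Real.logb 2 (p/q) + (1-p) * Real.logb 2 ((1-p)/(1-q))
        = (p * Real.log (p/q) + (1-p) * Real.log ((1-p)/(1-q))) / Real.log 2 from by
      rw [hlb, hlb]; ring, le_div_iff₀ hlog2]
    linarith
end

section
/- Fix δ ∈ (0, 1/2), r₀ > 0, set r = (1/(1−2δ))·√(r₀/(2·log₂ e)), assume r ≤ 1, let N = ⌊1/r⌋ and M = N + 1, and define δ_m = δ + (1−2δ)·(m−1)/N for m = 1,…,M (so δ = δ₁ < δ₂ < … < δ_M = 1−δ). Then for every n ≥ 1 there exists a decoder g : {0,1}^n → {1,…,M} such that (1/M)·∑_{m=1}^M ℙ_{Y ∼ Bern(δ_m)^{⊗n}}[ g(Y) ≠ m ] ≤ (1/M)·∑_{m=1}^M min{ 1, A_m + B_m }, where A_m = ∑_{t=0}^{T_m} C(n,t)·δ_m^t·(1−δ_m)^{n−t} for m ≥ 2 with T_m = ⌊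 n·log₂((1−δ_{m−1})/(1−δ_m)) / log₂(δ_m(1−δ_{m−1})/(δ_{m−1}(1−δ_m))) ⌋ and A₁ = 0, and B_m = ∑_{t=S_m}^{n} C(n,t)·δ_m^t·(1−δ_m)^{n−t} for m ≤ M−1 with S_m = ⌈ n·log₂((1−δ_{m+1})/(1−δ_m)) / log₂(δ_m(1−δ_{m+1})/(δ_{m+1}(1−δ_m))) ⌉ and B_M = 0. -/
/-- Probability of the event `E ⊆ (Fin k)^n` under the `n`-fold product measure whose
coordinates are i.i.d. with common distribution `P` on `Fin k`. -/
noncomputable def prodProb {k : ℕ} (P : Fin k → ℝ) (n : ℕ) (E : Set (Fin n → Fin k)) : ℝ :=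
  ∑ y : Fin n → Fin k, E.indicator (fun y => ∏ i, P (y i)) y

namespace BSCAux

/-! ### Counting and binomial lemmas -/

def ones {n : ℕ} (y : Fin n → Fin 2) : ℕ := (Finset.univ.filter (fun i => y i = 1)).card

lemma ones_le {n : ℕ} (y : Fin n → Fin 2) : ones y ≤ n := by
  have := Finset.card_filter_le (Finset.univ : Finset (Fin n)) (fun i => y i = 1)
  simpa [ones] using this

lemma vec_nonneg (p : ℝ) (h0 : 0 ≤ p) (h1 : p ≤ 1) :
    ∀ a : Fin 2, 0 ≤ (![1-p, p] : Fin 2 → ℝ) a := by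
  intro a
  have : a = 0 ∨ a = 1 := by omega
  rcases this with h | h <;> subst h <;> simp <;> linarith

lemma prod_eq (p : ℝ) {n : ℕ} (y : Fin n → Fin 2) :
    (∏ i, (![1-p, p] : Fin 2 → ℝ) (y i)) = p ^ ones y * (1-p) ^ (n - ones y) := by
  classical
  rw [← Finset.prod_filter_mul_prod_filter_not Finset.univ (fun i => y i = 1)]
  have h1 : ∀ i ∈ Finset.univ.filter (fun i => y i = 1),
      (![1-p, p] : Fin 2 → ℝ) (y i) = p := by
    intro i hi
    simp only [Finset.mem_filter] at hi
    rw [hi.2]; rfl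
  have h2 : ∀ i ∈ Finset.univ.filter (fun i => ¬ y i = 1),
      (![1-p, p] : Fin 2 → ℝ) (y i) = 1 - p := by
    intro i hi
    simp only [Finset.mem_filter] at hi
    have : y i = 0 := by omega
    rw [this]; rfl
  rw [Finset.prod_congr rfl h1, Finset.prod_congr rfl h2, Finset.prod_const, Finset.prod_const]
  have hcard : (Finset.univ.filter (fun i => ¬ y i = 1)).card = n - ones y := by
    have := Finset.card_filter_add_card_filter_not
      (s := (Finset.univ : Finset (Fin n))) (p := fun i => y i = 1)
    simp only [Finset.card_univ, Fintype.card_fin] at this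
    unfold ones; omega
  rw [hcard]; rfl

lemma card_ones {n t : ℕ} :
    (Finset.univ.filter (fun y : Fin n → Fin 2 => ones y = t)).card = n.choose t := by
  classical
  have hb : (Finset.univ.filter (fun y : Fin n → Fin 2 => ones y = t)).card
      = (Finset.powersetCard t (Finset.univ : Finset (Fin n))).card := by
    refine Finset.card_bij' (fun y _ => Finset.univ.filter (fun i => y i = 1))
      (fun s _ => fun i => if i ∈ s then 1 else 0) ?_ ?_ ?_ ?_
    · intro y hy
      simp only [Finset.mem_filter] at hy
      rw [Finset.mem_powersetCard]
      exact ⟨Finset.subset_univ _, hy.2⟩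
    · intro s hs
      rw [Finset.mem_powersetCard] at hs
      simp only [Finset.mem_filter, Finset.mem_univ, true_and]
      unfold ones
      rw [← hs.2]
      congr 1
      ext i
      simp only [Finset.mem_filter, Finset.mem_univ, true_and]
      by_cases h : i ∈ s <;> simp [h]
    · intro y hy
      funext i
      by_cases h : y i = 1
      · simp [h]
      · have : y i = 0 := by omega
        simp [h, this]
    · intro s hs
      ext i
      simp only [Finset.mem_filter, Finset.mem_univ, true_and]
      by_cases h : i ∈ s <;> simp [h]
  rw [hb, Finset.card_powersetCard, Finset.card_univ, Fintype.card_fin]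

lemma prodProb_pred (p : ℝ) {n : ℕ} (pred : ℕ → Prop) [DecidablePred pred] :
    prodProb ![1-p, p] n {y | pred (ones y)} =
      ∑ t ∈ (Finset.range (n+1)).filter pred, (n.choose t : ℝ) * p ^ t * (1-p) ^ (n-t) := by
  classical
  unfold prodProb
  have step : ∀ y : Fin n → Fin 2,
      ({y : Fin n → Fin 2 | pred (ones y)}).indicator
          (fun y => ∏ i, (![1-p,p] : Fin 2 → ℝ) (y i)) y
      = if pred (ones y) then p ^ ones y * (1-p) ^ (n - ones y) else 0 := by
    intro y
    rw [Set.indicator_apply, prod_eq]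
    simp [Set.mem_setOf_eq]
  rw [Finset.sum_congr rfl (fun y _ => step y)]
  rw [← Finset.sum_fiberwise_of_maps_to (g := ones) (t := Finset.range (n+1))
      (fun y _ => Finset.mem_range.mpr (Nat.lt_succ_of_le (ones_le y)))]
  rw [Finset.sum_filter]
  refine Finset.sum_congr rfl fun t ht => ?_
  have : ∀ y ∈ Finset.univ.filter (fun y : Fin n → Fin 2 => ones y = t),
      (if pred (ones y) then p ^ ones y * (1-p) ^ (n - ones y) else 0)
        = if pred t then p ^ t * (1-p) ^ (n - t) else 0 := by
    intro y hy
    simp only [Finset.mem_filter] at hy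
    rw [hy.2]
  rw [Finset.sum_congr rfl this, Finset.sum_const, card_ones, nsmul_eq_mul]
  by_cases h : pred t <;> simp [h, mul_assoc]

lemma prodProb_univ (p : ℝ) (n : ℕ) :
    prodProb ![1-p, p] n Set.univ = 1 := by
  classical
  have h := prodProb_pred (p := p) (n := n) (fun _ => True)
  simp only [Finset.filter_true] at h
  have hs : {y : Fin n → Fin 2 | True} = Set.univ := by ext; simp
  rw [hs] at h
  rw [h]
  have hbin := add_pow p (1-p) n
  have h1 : (p + (1-p)) = 1 := by ring
  rw [h1, one_pow] at hbin
  conv_rhs => rw [hbin]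
  exact Finset.sum_congr rfl fun t _ => by ring

lemma prodProb_mono (p : ℝ) (h0 : 0 ≤ p) (h1 : p ≤ 1) {n : ℕ} {E F : Set (Fin n → Fin 2)}
    (h : E ⊆ F) : prodProb ![1-p,p] n E ≤ prodProb ![1-p,p] n F := by
  unfold prodProb
  refine Finset.sum_le_sum fun y _ => ?_
  exact Set.indicator_le_indicator_of_subset h
    (fun z => Finset.prod_nonneg fun i _ => vec_nonneg p h0 h1 _) y

lemma prodProb_union_le (p : ℝ) (h0 : 0 ≤ p) (h1 : p ≤ 1) {n : ℕ}
    {E E1 E2 : Set (Fin n → Fin 2)} (h : E ⊆ E1 ∪ E2) :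
    prodProb ![1-p,p] n E ≤ prodProb ![1-p,p] n E1 + prodProb ![1-p,p] n E2 := by
  classical
  unfold prodProb
  rw [← Finset.sum_add_distrib]
  refine Finset.sum_le_sum fun y _ => ?_
  set f : (Fin n → Fin 2) → ℝ := fun y => ∏ i, (![1-p,p] : Fin 2 → ℝ) (y i) with hf
  have hf0 : ∀ z, 0 ≤ f z := fun z => Finset.prod_nonneg fun i _ => vec_nonneg p h0 h1 _
  by_cases hy : y ∈ E
  · rw [Set.indicator_of_mem hy]
    rcases h hy with h' | h'
    · rw [Set.indicator_of_mem h']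
      have : 0 ≤ E2.indicator f y := Set.indicator_nonneg (fun z _ => hf0 z) y
      linarith
    · rw [Set.indicator_of_mem h']
      have : 0 ≤ E1.indicator f y := Set.indicator_nonneg (fun z _ => hf0 z) y
      linarith
  · rw [Set.indicator_of_notMem hy]
    have h1' : 0 ≤ E1.indicator f y := Set.indicator_nonneg (fun z _ => hf0 z) y
    have h2' : 0 ≤ E2.indicator f y := Set.indicator_nonneg (fun z _ => hf0 z) y
    linarith

lemma prodProb_empty (p : ℝ) {n : ℕ} :
    prodProb ![1-p,p] n (∅ : Set (Fin n → Fin 2)) = 0 := by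
  simp [prodProb]

lemma prodProb_le_one (p : ℝ) (h0 : 0 ≤ p) (h1 : p ≤ 1) {n : ℕ} (E : Set (Fin n → Fin 2)) :
    prodProb ![1-p,p] n E ≤ 1 := by
  have := prodProb_mono p h0 h1 (Set.subset_univ E)
  rwa [prodProb_univ] at this

/-! ### Analytic lemmas -/

lemma kl_pos {a b : ℝ} (ha0 : 0 < a) (ha1 : a < 1) (hb0 : 0 < b) (hb1 : b < 1) (hab : a ≠ b) :
    0 < a * (Real.log a - Real.log b) + (1-a) * (Real.log (1-a) - Real.log (1-b)) := by
  have h1a : (0:ℝ) < 1 - a := by linarith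
  have h1b : (0:ℝ) < 1 - b := by linarith
  have h1 : Real.log (b/a) < b/a - 1 := by
    refine Real.log_lt_sub_one_of_pos (by positivity) ?_
    intro h
    rw [div_eq_one_iff_eq (ne_of_gt ha0)] at h
    exact hab h.symm
  have h2 : Real.log ((1-b)/(1-a)) < (1-b)/(1-a) - 1 := by
    refine Real.log_lt_sub_one_of_pos (by positivity) ?_
    intro h
    rw [div_eq_one_iff_eq (ne_of_gt h1a)] at h
    apply hab; linarith
  rw [Real.log_div (ne_of_gt hb0) (ne_of_gt ha0)] at h1
  rw [Real.log_div (ne_of_gt h1b) (ne_of_gt h1a)] at h2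
  have e1 : a * (Real.log b - Real.log a) < a * (b/a - 1) := mul_lt_mul_of_pos_left h1 ha0
  have e2 : (1-a) * (Real.log (1-b) - Real.log (1-a)) < (1-a) * ((1-b)/(1-a) - 1) :=
    mul_lt_mul_of_pos_left h2 h1a
  have f1 : a * (b/a - 1) = b - a := by field_simp
  have f2 : (1-a) * ((1-b)/(1-a) - 1) = a - b := by field_simp; ring
  nlinarith [e1, e2]

/-- For `0 < p < q < 1`, the ML threshold ratio lies strictly between `p` and `q`. -/
lemma tau_bound {p q : ℝ} (hp : 0 < p) (hpq : p < q) (hq : q < 1) :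
    0 < Real.log q + Real.log (1-p) - Real.log p - Real.log (1-q) ∧
    p * (Real.log q + Real.log (1-p) - Real.log p - Real.log (1-q))
        < Real.log (1-p) - Real.log (1-q) ∧
    Real.log (1-p) - Real.log (1-q)
        < q * (Real.log q + Real.log (1-p) - Real.log p - Real.log (1-q)) := by
  have h1p : (0:ℝ) < 1 - p := by linarith
  have h1q : (0:ℝ) < 1 - q := by linarith
  have hlpq : Real.log p < Real.log q := Real.log_lt_log hp hpq
  have hl1 : Real.log (1-q) < Real.log (1-p) := Real.log_lt_log h1q (by linarith)
  refine ⟨by linarith, ?_, ?_⟩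
  · have := kl_pos hp (by linarith) (lt_trans hp hpq) hq (ne_of_lt hpq)
    nlinarith [this]
  · have := kl_pos (lt_trans hp hpq) hq hp (by linarith) (ne_of_gt hpq)
    nlinarith [this]

/-- Log-likelihood denominator between `d j` and `d (j+1)`. -/
noncomputable def LL (d : ℕ → ℝ) (j : ℕ) : ℝ :=
  Real.log (d (j+1)) + Real.log (1 - d j) - Real.log (d j) - Real.log (1 - d (j+1))

/-- Real decision threshold between messages `j` and `j+1`. -/
noncomputable def TauD (d : ℕ → ℝ) (n j : ℕ) : ℝ :=
  (n : ℝ) * (Real.log (1 - d j) - Real.log (1 - d (j+1))) / LL d j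

private lemma key : ∀ (x A B c : ℝ), c ≠ 0 → B ≠ 0 → (x * (A / c)) / (B / c) = x * A / B := by
  intro x A B c hc hB; field_simp

lemma tau_eq_A (d : ℕ → ℝ) (n j : ℕ) (h0 : 0 < d j) (h1 : d j < d (j+1)) (h2 : d (j+1) < 1)
    (hL : 0 < LL d j) :
    ((n : ℝ) * Real.logb 2 ((1 - d j) / (1 - d (j+1))))
      / Real.logb 2 (d (j+1) * (1 - d j) / (d j * (1 - d (j+1)))) = TauD d n j := by
  have h1j : (0:ℝ) < 1 - d j := by linarith
  have h1m : (0:ℝ) < 1 - d (j+1) := by linarith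
  have hlog2 : Real.log 2 ≠ 0 := ne_of_gt (Real.log_pos (by norm_num))
  have hLne : Real.log (d (j+1)) + Real.log (1 - d j)
      - Real.log (d j) - Real.log (1 - d (j+1)) ≠ 0 := ne_of_gt hL
  rw [Real.logb, Real.logb, Real.log_div (ne_of_gt h1j) (ne_of_gt h1m),
      Real.log_div (ne_of_gt (mul_pos (lt_trans h0 h1) h1j)) (ne_of_gt (mul_pos h0 h1m)),
      Real.log_mul (ne_of_gt (lt_trans h0 h1)) (ne_of_gt h1j),
      Real.log_mul (ne_of_gt h0) (ne_of_gt h1m)]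
  have hBne : (Real.log (d (j+1)) + Real.log (1 - d j))
      - (Real.log (d j) + Real.log (1 - d (j+1))) ≠ 0 := by
    intro h; apply hLne; linarith
  rw [key _ _ _ _ hlog2 hBne, TauD, LL, div_eq_div_iff hBne hLne]
  ring

lemma tau_eq_B (d : ℕ → ℝ) (n j : ℕ) (h0 : 0 < d j) (h1 : d j < d (j+1)) (h2 : d (j+1) < 1)
    (hL : 0 < LL d j) :
    ((n : ℝ) * Real.logb 2 ((1 - d (j+1)) / (1 - d j)))
      / Real.logb 2 (d j * (1 - d (j+1)) / (d (j+1) * (1 - d j))) = TauD d n j := by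
  have h1j : (0:ℝ) < 1 - d j := by linarith
  have h1m : (0:ℝ) < 1 - d (j+1) := by linarith
  have hlog2 : Real.log 2 ≠ 0 := ne_of_gt (Real.log_pos (by norm_num))
  have hLne : Real.log (d (j+1)) + Real.log (1 - d j)
      - Real.log (d j) - Real.log (1 - d (j+1)) ≠ 0 := ne_of_gt hL
  rw [Real.logb, Real.logb, Real.log_div (ne_of_gt h1m) (ne_of_gt h1j),
      Real.log_div (ne_of_gt (mul_pos h0 h1m)) (ne_of_gt (mul_pos (lt_trans h0 h1) h1j)),
      Real.log_mul (ne_of_gt h0) (ne_of_gt h1m),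
      Real.log_mul (ne_of_gt (lt_trans h0 h1)) (ne_of_gt h1j)]
  have hBne : (Real.log (d j) + Real.log (1 - d (j+1)))
      - (Real.log (d (j+1)) + Real.log (1 - d j)) ≠ 0 := by
    intro h; apply hLne; linarith
  rw [key _ _ _ _ hlog2 hBne, TauD, LL, div_eq_div_iff hBne hLne]
  ring

end BSCAux

open BSCAux

/-- achievability bound for the BSC permutation channel with crossover
probability `δ`.  Messages are indexed by `m ∈ {0,…,N}` (so `M = N + 1` of them), the
`m`-th marginal is `Bern(δ_m)` with `δ_m = δ + (1−2δ)·m/N`, and there is a decoder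
whose average error probability is at most the average of `min{1, A_m + B_m}`, where
`A_m`, `B_m` are the binomial lower/upper tails at the likelihood-ratio thresholds. -/
theorem bsc_achievability (δ : ℝ) (hδ0 : 0 < δ) (hδ : δ < 1 / 2)
    (r₀ : ℝ) (hr₀ : 0 < r₀)
    (r : ℝ) (hr : r = (1 / (1 - 2 * δ)) * Real.sqrt (r₀ / (2 * Real.logb 2 (Real.exp 1))))
    (hr1 : r ≤ 1)
    (N : ℕ) (hN : N = ⌊1 / r⌋₊) (M : ℕ) (hM : M = N + 1)
    (d : ℕ → ℝ) (hd : ∀ m, d m = δ + (1 - 2 * δ) * (m : ℝ) / N)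
    (n : ℕ) (hn : 1 ≤ n)
    (A B : ℕ → ℝ)
    (hA : ∀ m, A m = if m = 0 then 0 else
        ∑ t ∈ Finset.range
            (⌊(n * Real.logb 2 ((1 - d (m - 1)) / (1 - d m)))
              / Real.logb 2 (d m * (1 - d (m - 1)) / (d (m - 1) * (1 - d m)))⌋₊ + 1),
          (n.choose t : ℝ) * (d m) ^ t * (1 - d m) ^ (n - t))
    (hB : ∀ m, B m = if m = M - 1 then 0 else
        ∑ t ∈ Finset.Icc
            (⌈(n * Real.logb 2 ((1 - d (m + 1)) / (1 - d m)))
              / Real.logb 2 (d m * (1 - d (m + 1)) / (d (m + 1) * (1 - d m)))⌉₊) n,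
          (n.choose t : ℝ) * (d m) ^ t * (1 - d m) ^ (n - t)) :
    ∃ g : (Fin n → Fin 2) → Fin M,
      (1 / (M : ℝ)) * ∑ m : Fin M, prodProb ![1 - d (m : ℕ), d (m : ℕ)] n {y | g y ≠ m}
        ≤ (1 / (M : ℝ)) * ∑ m : Fin M, min 1 (A (m : ℕ) + B (m : ℕ)) := by
  classical
  have h2δ : (0:ℝ) < 1 - 2*δ := by linarith
  have hlog2 : (0:ℝ) < Real.log 2 := Real.log_pos (by norm_num)
  have hrpos : 0 < r := by
    rw [hr]
    have hlb : Real.logb 2 (Real.exp 1) = 1 / Real.log 2 := by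
      rw [Real.logb, Real.log_exp]
    have hx : (0:ℝ) < r₀ / (2 * Real.logb 2 (Real.exp 1)) := by
      rw [hlb]
      positivity
    exact mul_pos (by positivity) (Real.sqrt_pos.mpr hx)
  have hN1 : 1 ≤ N := by
    rw [hN]
    have h1r : (1:ℝ) ≤ 1 / r := by
      rw [le_div_iff₀ hrpos]; linarith
    exact Nat.le_floor (by exact_mod_cast h1r)
  have hNR : (0:ℝ) < N := by
    have : 0 < N := hN1
    exact_mod_cast this
  have hnR : (0:ℝ) < n := by
    have : 0 < n := hn
    exact_mod_cast this
  -- basic facts about d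
  have hd0 : ∀ m : ℕ, 0 < d m := by
    intro m; rw [hd]
    have : 0 ≤ (1-2*δ) * (m:ℝ) / N := by positivity
    linarith
  have hdlt : ∀ m : ℕ, d m < d (m+1) := by
    intro m; rw [hd, hd]; push_cast
    have h1 : (1-2*δ) * (m:ℝ) < (1-2*δ) * ((m:ℝ)+1) :=
      mul_lt_mul_of_pos_left (by linarith) h2δ
    have := (div_lt_div_iff_of_pos_right hNR).mpr h1
    linarith
  have hdmon : ∀ a b : ℕ, a ≤ b → d a ≤ d b := by
    intro a b hab; rw [hd, hd]
    have h0 : (a:ℝ) ≤ b := by exact_mod_cast hab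
    have h1 : (1-2*δ) * (a:ℝ) ≤ (1-2*δ) * (b:ℝ) :=
      mul_le_mul_of_nonneg_left h0 (le_of_lt h2δ)
    have := (div_le_div_iff_of_pos_right hNR).mpr h1
    linarith
  have hd1 : ∀ m : ℕ, m ≤ N → d m < 1 := by
    intro m hm; rw [hd]
    have h1 : (m:ℝ) ≤ N := by exact_mod_cast hm
    have h2 : (1-2*δ) * (m:ℝ) / N ≤ 1-2*δ := by
      rw [div_le_iff₀ hNR]
      nlinarith
    linarith
  -- key threshold bounds
  have hkey : ∀ j : ℕ, j + 1 ≤ N →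
      0 < LL d j ∧ (n:ℝ) * d j < TauD d n j ∧ TauD d n j < (n:ℝ) * d (j+1) := by
    intro j hj
    obtain ⟨hL, hlo, hhi⟩ := tau_bound (hd0 j) (hdlt j) (hd1 (j+1) hj)
    have hLL : LL d j = Real.log (d (j+1)) + Real.log (1 - d j)
        - Real.log (d j) - Real.log (1 - d (j+1)) := rfl
    refine ⟨by rw [hLL]; exact hL, ?_, ?_⟩
    · rw [TauD, lt_div_iff₀ (by rw [hLL] at *; exact hL)]
      rw [hLL]
      nlinarith [hlo]
    · rw [TauD, div_lt_iff₀ (by rw [hLL] at *; exact hL)]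
      rw [hLL]
      nlinarith [hhi]
  have hTaumono : ∀ i j : ℕ, i < j → j + 1 ≤ N → TauD d n i < TauD d n j := by
    intro i j hij hj
    have h1 := (hkey i (by omega)).2.2
    have h2 := (hkey j hj).2.1
    have h3 : (n:ℝ) * d (i+1) ≤ (n:ℝ) * d j :=
      mul_le_mul_of_nonneg_left (hdmon (i+1) j (by omega)) (le_of_lt hnR)
    linarith
  set s : ℕ → ℕ := fun j => ⌈TauD d n j⌉₊ with hs_def
  have hsmono : ∀ i j : ℕ, i ≤ j → j + 1 ≤ N → s i ≤ s j := by
    intro i j hij hj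
    rcases eq_or_lt_of_le hij with h | h
    · rw [h]
    · exact Nat.ceil_le_ceil (le_of_lt (hTaumono i j h hj))
  -- the decoder
  have gbound : ∀ y : Fin n → Fin 2,
      ((Finset.range N).filter (fun j => s j ≤ ones y)).card < M := by
    intro y
    have := Finset.card_filter_le (Finset.range N) (fun j => s j ≤ ones y)
    rw [Finset.card_range] at this; omega
  refine ⟨fun y => ⟨_, gbound y⟩, ?_⟩
  refine mul_le_mul_of_nonneg_left (Finset.sum_le_sum fun m _ => ?_) (by positivity)
  -- per-message bound
  set mv := (m : ℕ) with hmv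
  have hmN : mv ≤ N := by
    have := m.isLt; omega
  have hq0 : (0:ℝ) ≤ d mv := le_of_lt (hd0 mv)
  have hq1 : d mv ≤ 1 := le_of_lt (hd1 mv hmN)
  set E1 : Set (Fin n → Fin 2) :=
    if mv = 0 then ∅ else {y | ones y ≤ ⌊TauD d n (mv - 1)⌋₊} with hE1_def
  set E2 : Set (Fin n → Fin 2) :=
    if mv = N then ∅ else {y | s mv ≤ ones y} with hE2_def
  have hsub : {y : Fin n → Fin 2 | (⟨_, gbound y⟩ : Fin M) ≠ m} ⊆ E1 ∪ E2 := by
    intro y hy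
    simp only [Set.mem_setOf_eq] at hy
    set c := ((Finset.range N).filter (fun j => s j ≤ ones y)).card with hc_def
    have hc : c ≠ mv := by
      intro h
      exact hy (Fin.ext h)
    rcases lt_or_gt_of_ne hc with hlt | hgt
    · -- c < mv : lower tail
      have hm1 : 1 ≤ mv := by omega
      have hnot : ¬ s (mv - 1) ≤ ones y := by
        intro hle
        have hsubset : Finset.range mv ⊆
            (Finset.range N).filter (fun j => s j ≤ ones y) := by
          intro j hj
          rw [Finset.mem_range] at hj
          rw [Finset.mem_filter, Finset.mem_range]
          refine ⟨by omega, ?_⟩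
          exact le_trans (hsmono j (mv-1) (by omega) (by omega)) hle
        have := Finset.card_le_card hsubset
        rw [Finset.card_range] at this
        omega
      push_neg at hnot
      left
      have hceil : ⌈TauD d n (mv-1)⌉₊ ≤ ⌊TauD d n (mv-1)⌋₊ + 1 :=
        Nat.ceil_le_floor_add_one _
      have hones : ones y ≤ ⌊TauD d n (mv-1)⌋₊ := by
        have hlt' : ones y < s (mv-1) := hnot
        simp only [hs_def] at hlt'
        omega
      rw [hE1_def, if_neg (by omega : ¬ mv = 0)]
      exact hones
    · -- c > mv : upper tail
      have hcN : c ≤ N := by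
        have := Finset.card_filter_le (Finset.range N) (fun j => s j ≤ ones y)
        rw [Finset.card_range] at this
        omega
      have hmvN : mv < N := by omega
      have hs' : s mv ≤ ones y := by
        by_contra hcon
        push_neg at hcon
        have hsubset : (Finset.range N).filter (fun j => s j ≤ ones y)
            ⊆ Finset.range mv := by
          intro j hj
          rw [Finset.mem_filter, Finset.mem_range] at hj
          rw [Finset.mem_range]
          by_contra hj2
          push_neg at hj2
          have := hsmono mv j hj2 (by omega)
          omega
        have := Finset.card_le_card hsubset
        rw [Finset.card_range] at this
        omega
      right
      rw [hE2_def, if_neg (by omega : ¬ mv = N)]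
      exact hs'
  -- value of prodProb on E1
  have hE1val : prodProb ![1 - d mv, d mv] n E1 = A mv := by
    by_cases hm0 : mv = 0
    · rw [hE1_def, if_pos hm0, prodProb_empty, hA, if_pos hm0]
    · obtain ⟨j, hj1⟩ : ∃ j, mv = j + 1 := ⟨mv - 1, by omega⟩
      have hjN : j + 1 ≤ N := by omega
      have hL := (hkey j hjN).1
      have hhi := (hkey j hjN).2.2
      rw [hE1_def, if_neg hm0, hA, if_neg hm0, hj1]
      simp only [Nat.add_sub_cancel]
      rw [tau_eq_A d n j (hd0 j) (hdlt j) (hd1 (j+1) hjN) hL]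
      have hTn : ⌊TauD d n j⌋₊ ≤ n := by
        have h1 : TauD d n j ≤ (n:ℝ) := by
          have h2 : (n:ℝ) * d (j+1) ≤ (n:ℝ) := by
            nlinarith [hd1 (j+1) hjN, hd0 (j+1)]
          linarith
        have h3 := Nat.floor_le_floor h1
        simpa using h3
      have hset : (Finset.range (n+1)).filter (fun t => t ≤ ⌊TauD d n j⌋₊)
          = Finset.range (⌊TauD d n j⌋₊ + 1) := by
        ext t
        simp only [Finset.mem_filter, Finset.mem_range]
        omega
      have hpred := prodProb_pred (p := d (j+1)) (n := n)
        (fun t => t ≤ ⌊TauD d n j⌋₊)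
      rw [hpred, hset]
  -- value of prodProb on E2
  have hE2val : prodProb ![1 - d mv, d mv] n E2 = B mv := by
    by_cases hmN' : mv = N
    · rw [hE2_def, if_pos hmN', prodProb_empty, hB, if_pos (by omega)]
    · have hmvN : mv + 1 ≤ N := by omega
      have hL := (hkey mv hmvN).1
      rw [hE2_def, if_neg hmN', hB, if_neg (by omega)]
      rw [tau_eq_B d n mv (hd0 mv) (hdlt mv) (hd1 (mv+1) hmvN) hL]
      simp only [hs_def]
      have hset : (Finset.range (n+1)).filter (fun t => ⌈TauD d n mv⌉₊ ≤ t)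
          = Finset.Icc ⌈TauD d n mv⌉₊ n := by
        ext t
        simp only [Finset.mem_filter, Finset.mem_range, Finset.mem_Icc]
        omega
      have hpred := prodProb_pred (p := d mv) (n := n)
        (fun t => ⌈TauD d n mv⌉₊ ≤ t)
      rw [hpred, hset]
  refine le_min (prodProb_le_one (d mv) hq0 hq1 _) ?_
  refine le_trans (prodProb_union_le (d mv) hq0 hq1 hsub)
    (le_of_eq (by rw [hE1val, hE2val]))
end
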